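/- Fix L_{xx}, L_{yy} ≥ 0, L_{yx}, μ_x, μ_y > 0, τ, σ, θ > 0, α ∈ [0, 1/σ), and ρ ∈ (0,1]. Suppose the 5×5 matrix G (with diagonal (1/τ + μ_x − 1/(ρτ), 1/σ + μ_y − 1/(ρσ), 1/τ − L_{xx}, 1/σ − α, α/ρ) and off-diagonals G(2,3) = (θ/ρ − 1)L_{yx}, G(2,4) = (θ/ρ − 1)L_{yy}, G(3,5) = −(θ/ρ)L_{yx}, G(4,5) = −(θ/ρ)L_{yy}, zeros elsewhere) is positive semidefinite. Then the 3×3 matrix G'' with rows ((1/σ)(1 − 1/ρ) + μ_y + α/ρ, −(|1 − θ/ρ| + θ/ρ)L_{yx}, −(|1 − θ/ρ| + θ/ρ)L_{yy}), (−(|1 − θ/ρ| + θ/ρ)L_{yx}, 1/τ − L_{xx}, 0), (−(|1 − θ/ρ| + θ/ρ)L_{yy}, 0, 1/σ − α) is positive semidefinite. -/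

import Mathlib

/-- The 5×5 matrix `G` from the SAPD step-size condition. -/
noncomputable def sapdG (Lxx Lyy Lyx μx μy τ σ θ α ρ : ℝ) : Matrix (Fin 5) (Fin 5) ℝ :=
  !![1 / τ + μx - 1 / (ρ * τ), 0, 0, 0, 0;
     0, 1 / σ + μy - 1 / (ρ * σ), (θ / ρ - 1) * Lyx, (θ / ρ - 1) * Lyy, 0;
     0, (θ / ρ - 1) * Lyx, 1 / τ - Lxx, 0, -(θ / ρ) * Lyx;
     0, (θ / ρ - 1) * Lyy, 0, 1 / σ - α, -(θ / ρ) * Lyy;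
     0, 0, -(θ / ρ) * Lyx, -(θ / ρ) * Lyy, α / ρ]

/-- `G ⪰ 0` implies that the 3×3 matrix `G''` is positive semidefinite. -/
theorem sapdG_psd_implies_G''_psd
    (Lxx Lyy Lyx μx μy τ σ θ α ρ : ℝ)
    (hLxx : 0 ≤ Lxx) (hLyy : 0 ≤ Lyy) (hLyx : 0 < Lyx)
    (hμx : 0 < μx) (hμy : 0 < μy) (hτ : 0 < τ) (hσ : 0 < σ)
    (hθ : 0 < θ) (hα0 : 0 ≤ α) (hα1 : α < 1 / σ) (hρ0 : 0 < ρ) (hρ1 : ρ ≤ 1)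
    (hG : (sapdG Lxx Lyy Lyx μx μy τ σ θ α ρ).PosSemidef) :
    (Matrix.of
      !![(1 / σ) * (1 - 1 / ρ) + μy + α / ρ,
            -(|1 - θ / ρ| + θ / ρ) * Lyx, -(|1 - θ / ρ| + θ / ρ) * Lyy;
         -(|1 - θ / ρ| + θ / ρ) * Lyx, 1 / τ - Lxx, 0;
         -(|1 - θ / ρ| + θ / ρ) * Lyy, 0, 1 / σ - α]).PosSemidef := by
  have hρσ : 0 < ρ * σ := mul_pos hρ0 hσ
  have hof : ∀ (M : Matrix (Fin 3) (Fin 3) ℝ) i j, Matrix.of M i j = M i j := fun _ _ _ => rfl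
  rw [Matrix.posSemidef_iff_dotProduct_mulVec]
  constructor
  · ext i j
    fin_cases i <;> fin_cases j <;>
      simp [Matrix.conjTranspose_apply, hof]
  · intro x
    by_cases hcase : θ / ρ ≤ 1
    · have habs : |1 - θ / ρ| = 1 - θ / ρ := abs_of_nonneg (by linarith)
      have key := hG.dotProduct_mulVec_nonneg ![0, x 0, x 1, x 2, x 0]
      simp only [sapdG, Matrix.mulVec, dotProduct, Fin.sum_univ_five,
        Fin.sum_univ_three, Matrix.cons_val', Matrix.cons_val_zero, Matrix.cons_val_one,
        Matrix.head_cons, Matrix.empty_val', Matrix.cons_val_fin_one, Matrix.head_fin_const,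
        star_trivial, Matrix.of_apply, Matrix.cons_val_succ, Pi.star_apply,
        Matrix.cons_val_two, Matrix.cons_val_three, Matrix.cons_val_four, Matrix.tail_cons, hof] at key ⊢
      rw [habs]
      have : (1 / σ) * (1 - 1 / ρ) + μy = 1 / σ + μy - 1 / (ρ * σ) := by
        field_simp; ring
      rw [this]
      linarith [key]
    · push_neg at hcase
      have habs : |1 - θ / ρ| = θ / ρ - 1 := by rw [abs_sub_comm]; exact abs_of_nonneg (by linarith)
      have key := hG.dotProduct_mulVec_nonneg ![0, -(x 0), x 1, x 2, x 0]
      simp only [sapdG, Matrix.mulVec, dotProduct, Fin.sum_univ_five,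
        Fin.sum_univ_three, Matrix.cons_val', Matrix.cons_val_zero, Matrix.cons_val_one,
        Matrix.head_cons, Matrix.empty_val', Matrix.cons_val_fin_one, Matrix.head_fin_const,
        star_trivial, Matrix.of_apply, Matrix.cons_val_succ, Pi.star_apply,
        Matrix.cons_val_two, Matrix.cons_val_three, Matrix.cons_val_four, Matrix.tail_cons, hof] at key ⊢
      rw [habs]
      have : (1 / σ) * (1 - 1 / ρ) + μy = 1 / σ + μy - 1 / (ρ * σ) := by
        field_simp; ring
      rw [this]
      linarith [key]
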